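/- Let X be a compact metric space, f : X → X an expansive homeomorphism with the (classical) shadowing property. Then f is topologically stable in Walters' sense: for every ε > 0 there is δ > 0 such that for every homeomorphism g : X → X with d_{C⁰}(f,g) ≤ δ there is a continuous map h : X → X with d_{C⁰}(h, id_X) ≤ ε and f ∘ h = h ∘ g. (This is the specialization of the plaque-stability theorem to the trivial plaque system by points.) -/

import Mathlib

open Metric

private lemma cont_zpow {X : Type*} [MetricSpace X] (f : X ≃ₜ X) (n : ℤ) :
    Continuous ((f.toEquiv ^ n : X ≃ X) : X → X) := by
  induction n using Int.induction_on with
  | zero => simpa using continuous_id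
  | succ k ih =>
      have h1 : (f.toEquiv ^ ((k : ℤ) + 1) : X ≃ X) = f.toEquiv ^ (k : ℤ) * f.toEquiv :=
        zpow_add_one _ _
      rw [h1, Equiv.Perm.coe_mul]
      exact ih.comp f.continuous
  | pred k ih =>
      have h1 : (f.toEquiv ^ (-(k : ℤ) - 1) : X ≃ X) = f.toEquiv ^ (-(k : ℤ)) * (f.toEquiv)⁻¹ :=
        zpow_sub_one _ _
      rw [h1, Equiv.Perm.coe_mul, Equiv.Perm.inv_def]
      exact ih.comp f.symm.continuous

private lemma unif_exp {X : Type*} [MetricSpace X] [CompactSpace X] (f : X ≃ₜ X) {c : ℝ}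
    (hc : 0 < c)
    (hexp : ∀ x y : X, (∀ n : ℤ, dist ((f.toEquiv ^ n) x) ((f.toEquiv ^ n) y) ≤ c) → x = y)
    {η : ℝ} (hη : 0 < η) :
    ∃ N : ℕ, ∀ x y : X,
      (∀ n : ℤ, |n| ≤ (N : ℤ) → dist ((f.toEquiv ^ n) x) ((f.toEquiv ^ n) y) ≤ c) →
      dist x y < η := by
  by_contra hcon
  push_neg at hcon
  set V : ℕ → Set (X × X) := fun N =>
    {p | η ≤ dist p.1 p.2} ∩
      ⋂ (n : ℤ) (_ : |n| ≤ (N : ℤ)),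
        {p : X × X | dist ((f.toEquiv ^ n) p.1) ((f.toEquiv ^ n) p.2) ≤ c} with hV
  have hmemV : ∀ N (p : X × X), p ∈ V N ↔ η ≤ dist p.1 p.2 ∧
      ∀ n : ℤ, |n| ≤ (N : ℤ) → dist ((f.toEquiv ^ n) p.1) ((f.toEquiv ^ n) p.2) ≤ c := by
    intro N p
    simp [hV, Set.mem_iInter]
  have hsub : ∀ N, V (N + 1) ⊆ V N := by
    intro N p hp
    rw [hmemV] at hp ⊢
    exact ⟨hp.1, fun n hn => hp.2 n (le_trans hn (by push_cast; linarith))⟩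
  have hne : ∀ N, (V N).Nonempty := by
    intro N
    obtain ⟨x, y, h1, h2⟩ := hcon N
    exact ⟨(x, y), (hmemV N (x, y)).mpr ⟨h2, h1⟩⟩
  have hclosed : ∀ N, IsClosed (V N) := by
    intro N
    refine IsClosed.inter (isClosed_le continuous_const
      (continuous_fst.dist continuous_snd)) ?_
    refine isClosed_iInter fun n => isClosed_iInter fun _ => ?_
    exact isClosed_le (((cont_zpow f n).comp continuous_fst).dist
      ((cont_zpow f n).comp continuous_snd)) continuous_const
  obtain ⟨⟨x, y⟩, hxy⟩ := IsCompact.nonempty_iInter_of_sequence_nonempty_isCompact_isClosed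
    V hsub hne ((hclosed 0).isCompact) hclosed
  simp only [Set.mem_iInter] at hxy
  have hxy' : ∀ N : ℕ, η ≤ dist x y ∧
      ∀ n : ℤ, |n| ≤ (N : ℤ) → dist ((f.toEquiv ^ n) x) ((f.toEquiv ^ n) y) ≤ c := by
    intro N; exact (hmemV N (x, y)).mp (hxy N)
  have hxeq : x = y := by
    apply hexp
    intro n
    exact (hxy' n.natAbs).2 n (by rw [Int.abs_eq_natAbs])
  have := (hxy' 0).1
  rw [hxeq, dist_self] at this
  linarith

/-- Walters' stability theorem: an expansive homeomorphism with the shadowing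
property on a compact metric space is topologically stable. -/
theorem walters_stability {X : Type*} [MetricSpace X] [CompactSpace X]
    (f : X ≃ₜ X)
    (hexp : ∃ c > (0:ℝ), ∀ x y : X,
      (∀ n : ℤ, dist ((f.toEquiv ^ n) x) ((f.toEquiv ^ n) y) ≤ c) → x = y)
    (hshad : ∀ ε > (0:ℝ), ∃ δ > (0:ℝ), ∀ x : ℤ → X,
      (∀ k : ℤ, dist (f (x k)) (x (k+1)) ≤ δ) →
      ∃ z : X, ∀ k : ℤ, dist ((f.toEquiv ^ k) z) (x k) ≤ ε) :
    ∀ ε > (0:ℝ), ∃ δ > (0:ℝ), ∀ g : X ≃ₜ X,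
      (∀ x : X, dist (f x) (g x) ≤ δ) →
      ∃ h : X → X, Continuous h ∧ (∀ x : X, dist (h x) x ≤ ε) ∧
        ∀ x : X, f (h x) = h (g x) := by
  obtain ⟨c, hc, hexp⟩ := hexp
  intro ε hε
  set ε' : ℝ := min ε (c / 3) with hε'def
  have hε' : 0 < ε' := lt_min hε (by linarith)
  have hε'c : ε' ≤ c / 3 := min_le_right _ _
  have hε'ε : ε' ≤ ε := min_le_left _ _
  obtain ⟨δ, hδ, hshad⟩ := hshad ε' hε'
  refine ⟨δ, hδ, ?_⟩
  intro g hg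
  have key : ∀ x : X, ∃ z : X, ∀ k : ℤ, dist ((f.toEquiv ^ k) z) ((g.toEquiv ^ k) x) ≤ ε' := by
    intro x
    apply hshad (fun k => (g.toEquiv ^ k) x)
    intro k
    have h1 : (g.toEquiv ^ (k + 1)) x = g ((g.toEquiv ^ k) x) := by
      rw [show k + 1 = 1 + k by ring, zpow_add, zpow_one, Equiv.Perm.coe_mul]
      rfl
    simp only [h1]
    exact hg _
  have uniq : ∀ (x z z' : X),
      (∀ k : ℤ, dist ((f.toEquiv ^ k) z) ((g.toEquiv ^ k) x) ≤ ε') →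
      (∀ k : ℤ, dist ((f.toEquiv ^ k) z') ((g.toEquiv ^ k) x) ≤ ε') → z = z' := by
    intro x z z' h1 h2
    apply hexp
    intro n
    calc dist ((f.toEquiv ^ n) z) ((f.toEquiv ^ n) z')
        ≤ dist ((f.toEquiv ^ n) z) ((g.toEquiv ^ n) x)
          + dist ((g.toEquiv ^ n) x) ((f.toEquiv ^ n) z') := dist_triangle _ _ _
      _ ≤ ε' + ε' := add_le_add (h1 n) (by rw [dist_comm]; exact h2 n)
      _ ≤ c := by linarith
  choose h hshadow using key
  have hdist : ∀ x : X, dist (h x) x ≤ ε := by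
    intro x
    have := hshadow x 0
    simp only [zpow_zero, Equiv.Perm.coe_one, id_eq] at this
    linarith
  have equi : ∀ x : X, f (h x) = h (g x) := by
    intro x
    apply uniq (g x)
    · intro k
      have e1 : (f.toEquiv ^ k) (f (h x)) = (f.toEquiv ^ (k + 1)) (h x) := by
        rw [zpow_add_one, Equiv.Perm.coe_mul]; rfl
      have e2 : (g.toEquiv ^ k) (g x) = (g.toEquiv ^ (k + 1)) x := by
        rw [zpow_add_one, Equiv.Perm.coe_mul]; rfl
      rw [e1, e2]
      exact hshadow x (k + 1)
    · exact hshadow (g x)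
  have hcont : Continuous h := by
    rw [Metric.continuous_iff]
    intro x η hη
    obtain ⟨N, hN⟩ := unif_exp f hc hexp hη
    have hk : ∀ k : ℤ, ∃ ρ > (0:ℝ), ∀ y : X, dist x y < ρ →
        dist ((g.toEquiv ^ k) x) ((g.toEquiv ^ k) y) ≤ c / 3 := by
      intro k
      obtain ⟨ρ, hρ, hρ'⟩ := Metric.continuous_iff.mp (cont_zpow g k) x (c / 3) (by linarith)
      refine ⟨ρ, hρ, fun y hy => le_of_lt ?_⟩
      rw [dist_comm]
      exact hρ' y (by rw [dist_comm]; exact hy)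
    choose ρ hρpos hρ using hk
    set s : Finset ℤ := Finset.Icc (-(N : ℤ)) N with hs
    have hsne : s.Nonempty := ⟨0, by simp [hs]⟩
    refine ⟨s.inf' hsne ρ, (Finset.lt_inf'_iff hsne).mpr fun k _ => hρpos k, ?_⟩
    intro y hy
    apply hN
    intro n hn
    have hns : n ∈ s := by
      rw [hs, Finset.mem_Icc]
      exact abs_le.mp hn
    have hgy : dist ((g.toEquiv ^ n) x) ((g.toEquiv ^ n) y) ≤ c / 3 :=
      hρ n y (by rw [dist_comm]; exact lt_of_lt_of_le hy (Finset.inf'_le _ hns))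
    calc dist ((f.toEquiv ^ n) (h y)) ((f.toEquiv ^ n) (h x))
        ≤ dist ((f.toEquiv ^ n) (h y)) ((g.toEquiv ^ n) y)
          + dist ((g.toEquiv ^ n) y) ((g.toEquiv ^ n) x)
          + dist ((g.toEquiv ^ n) x) ((f.toEquiv ^ n) (h x)) := dist_triangle4 _ _ _ _
      _ ≤ ε' + c / 3 + ε' := by
          refine add_le_add (add_le_add (hshadow y n) (by rw [dist_comm]; exact hgy)) ?_
          rw [dist_comm]; exact hshadow x n
      _ ≤ c := by linarith
  exact ⟨h, hcont, hdist, equi⟩
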